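/- Let p be a prime, let χ : U_1 → ℤ/p²ℤ be a continuous character in reduced form of type ⟨l, m⟩ with l < p, and let u(t) = t·∏_{k≥1}(1+t^k)^{n_k} ∈ 𝒩 with n_k ∈ {0,…,p−1} and smallest nonzero index k̃ satisfying 0 < k̃ < l. If χ(E_l) ≡ x_l ≢ 0 (mod p), then (ᵤχ)(E_{l−k̃}) ≡ n_{k̃}·(l − k̃)·x_l ≢ 0 (mod p). -/

import Mathlib

open PowerSeries

/-- The subgroup `1 + t^k F_p[[t]]` of the units of `F_p[[t]]`. -/
def Ugrp (p k : ℕ) : Subgroup (PowerSeries (ZMod p))ˣ where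
  carrier := {u | (X : PowerSeries (ZMod p)) ^ k ∣ ((u : PowerSeries (ZMod p)) - 1)}
  one_mem' := by simp
  mul_mem' := by
    intro a b ha hb
    have h : ((a * b : (PowerSeries (ZMod p))ˣ) : PowerSeries (ZMod p)) - 1
        = (a : PowerSeries (ZMod p)) * ((b : PowerSeries (ZMod p)) - 1)
          + ((a : PowerSeries (ZMod p)) - 1) := by push_cast; ring
    rw [Set.mem_setOf_eq, h]
    exact dvd_add (Dvd.dvd.mul_left hb _) ha
  inv_mem' := by
    intro a ha
    have key : ((a⁻¹ : (PowerSeries (ZMod p))ˣ) : PowerSeries (ZMod p)) - 1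
        = -(((a⁻¹ : (PowerSeries (ZMod p))ˣ) : PowerSeries (ZMod p))
            * ((a : PowerSeries (ZMod p)) - 1)) := by
      rw [mul_sub, Units.inv_mul]; ring
    rw [Set.mem_setOf_eq, key]
    exact dvd_neg.mpr (Dvd.dvd.mul_left ha _)

/-- `E j = 1 + t^j` as an element of the principal units `U₁`. -/
noncomputable def Eu (p : ℕ) [Fact p.Prime] (j : ℕ) (hj : 0 < j) : Ugrp p 1 := by
  have hu : IsUnit (1 + X ^ j : PowerSeries (ZMod p)) := by
    rw [isUnit_iff_constantCoeff]
    simp [zero_pow hj.ne']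
  refine ⟨hu.unit, ?_⟩
  show (X : PowerSeries (ZMod p)) ^ 1 ∣ _
  rw [IsUnit.unit_spec, pow_one, add_sub_cancel_left]
  exact dvd_pow_self X hj.ne'

/-- `χ` is a homomorphism from the multiplicative group `U₁` to `ℤ/p²ℤ`. -/
def IsHom (p : ℕ) (χ : Ugrp p 1 → ZMod (p ^ 2)) : Prop :=
  ∀ a b : Ugrp p 1, χ (a * b) = χ a + χ b

/-- Continuity of `χ` (the target being discrete): `χ` kills some `1 + t^N F_p[[t]]`. -/
def IsCont (p : ℕ) (χ : Ugrp p 1 → ZMod (p ^ 2)) : Prop :=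
  ∃ N : ℕ, ∀ u : Ugrp p 1,
    (X : PowerSeries (ZMod p)) ^ N ∣ ((u : (PowerSeries (ZMod p))ˣ) : PowerSeries (ZMod p)) - 1 →
      χ u = 0

/-- The break sequence of `χ : U₁ → ℤ/p²ℤ` is `⟨b0, b1⟩`: `b^{(j-1)}` is the largest
positive `b` such that `χ(1 + t^b F_p[[t]])` is not contained in `p^j · ℤ/p²ℤ`. -/
def HasBreaks (p : ℕ) (χ : Ugrp p 1 → ZMod (p ^ 2)) (b0 b1 : ℕ) : Prop :=
  IsGreatest {b : ℕ | 0 < b ∧ ∃ u : Ugrp p 1,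
    ((X : PowerSeries (ZMod p)) ^ b ∣ ((u : (PowerSeries (ZMod p))ˣ) : PowerSeries (ZMod p)) - 1)
      ∧ ¬ (p : ZMod (p ^ 2)) ∣ χ u} b0 ∧
  IsGreatest {b : ℕ | 0 < b ∧ ∃ u : Ugrp p 1,
    ((X : PowerSeries (ZMod p)) ^ b ∣ ((u : (PowerSeries (ZMod p))ˣ) : PowerSeries (ZMod p)) - 1)
      ∧ χ u ≠ 0} b1


/-! ### Auxiliary lemmas -/

lemma charP_ps (p : ℕ) [Fact p.Prime] : CharP (PowerSeries (ZMod p)) p :=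
  charP_of_injective_ringHom (PowerSeries.C_injective) p

section PSAux
variable {R : Type*} [CommRing R]

lemma coeff_mul_of_X_pow_dvd {k : ℕ} {f : PowerSeries R} (g : PowerSeries R)
    (h : (X : PowerSeries R) ^ k ∣ f) :
    coeff k (f * g) = coeff k f * constantCoeff g := by
  rw [coeff_mul, Finset.sum_eq_single (k, 0)]
  · simp [coeff_zero_eq_constantCoeff]
  · rintro ⟨a, b⟩ hab hne
    rw [Finset.HasAntidiagonal.mem_antidiagonal] at hab
    have ha : a < k := by
      rcases lt_or_eq_of_le (Nat.le.intro hab) with h' | h'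
      · exact h'
      · exfalso; apply hne; subst h'; simp at hab ⊢; omega
    rw [X_pow_dvd_iff.mp h a ha, zero_mul]
  · intro h'; simp [Finset.mem_antidiagonal] at h'

lemma pow_one_add {k : ℕ} {r : PowerSeries R} (hr : (X : PowerSeries R) ^ k ∣ r) (q : ℕ) :
    (X : PowerSeries R) ^ (k + k) ∣ (1 + r) ^ q - 1 - q • r := by
  induction q with
  | zero => simp
  | succ q ih =>
    have key : (1 + r) ^ (q + 1) - 1 - (q + 1) • r
        = ((1 + r) ^ q - 1 - q • r) * (1 + r) + (q • r) * r := by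
      rw [pow_succ]
      push_cast [nsmul_eq_mul]
      ring
    rw [key]
    refine dvd_add (Dvd.dvd.mul_right ih _) ?_
    rw [pow_add]
    exact mul_dvd_mul (by rw [nsmul_eq_mul]; exact Dvd.dvd.mul_left hr _) hr

lemma pow_one_add' {k : ℕ} (hk : 0 < k) {r : PowerSeries R} (hr : (X : PowerSeries R) ^ k ∣ r)
    (q : ℕ) : (X : PowerSeries R) ^ (k + 1) ∣ (1 + r) ^ q - 1 - q • r :=
  dvd_trans (pow_dvd_pow _ (by omega)) (pow_one_add hr q)

lemma dvd_sub_one_of_pow {k : ℕ} (hk : 0 < k) {r : PowerSeries R}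
    (hr : (X : PowerSeries R) ^ k ∣ r) (q : ℕ) :
    (X : PowerSeries R) ^ k ∣ (1 + r) ^ q - 1 := by
  have h := pow_one_add' hk hr q
  have e : (1 + r) ^ q - 1 = ((1 + r) ^ q - 1 - q • r) + q • r := by ring
  rw [e]
  exact dvd_add (dvd_trans (pow_dvd_pow _ (by omega)) h)
    (by rw [nsmul_eq_mul]; exact Dvd.dvd.mul_left hr _)

lemma coeff_pow_one_add {k : ℕ} (hk : 0 < k) {r : PowerSeries R}
    (hr : (X : PowerSeries R) ^ k ∣ r) (q : ℕ) :
    coeff k ((1 + r) ^ q) = q • coeff k r := by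
  have h := pow_one_add' hk hr q
  have h2 : coeff k ((1 + r) ^ q - 1 - q • r) = 0 := X_pow_dvd_iff.mp h k (by omega)
  have h3 : coeff k ((1 : PowerSeries R)) = 0 := by simp [coeff_one, hk.ne']
  simp only [map_sub, map_nsmul, h3, sub_zero] at h2
  exact sub_eq_zero.mp h2

lemma X_pow_succ_dvd_sub {k : ℕ} {f g : PowerSeries R}
    (hf : (X : PowerSeries R) ^ k ∣ f - 1) (hg : (X : PowerSeries R) ^ k ∣ g - 1)
    (hc : coeff k f = coeff k g) : (X : PowerSeries R) ^ (k + 1) ∣ f - g := by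
  rw [X_pow_dvd_iff]
  intro i hi
  rcases lt_or_eq_of_le (Nat.lt_succ_iff.mp hi) with h' | h'
  · have h1 := X_pow_dvd_iff.mp hf i h'
    have h2 := X_pow_dvd_iff.mp hg i h'
    have e : f - g = (f - 1) - (g - 1) := by ring
    rw [e, map_sub, h1, h2, sub_zero]
  · subst h'; rw [map_sub, hc, sub_self]

lemma sub_one_factor {x g gi vps : R} (h1 : x * g = vps)
    (h2 : g * gi = 1) : x - 1 = (vps - g) * gi := by
  linear_combination gi * h1 - (x - 1) * h2

end PSAux

/-! ### Group-level lemmas -/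

def psl (p : ℕ) (u : Ugrp p 1) : PowerSeries (ZMod p) :=
  ((u : (PowerSeries (ZMod p))ˣ) : PowerSeries (ZMod p))

lemma psl_mul (p : ℕ) (u v : Ugrp p 1) : psl p (u * v) = psl p u * psl p v := rfl
lemma psl_one (p : ℕ) : psl p (1 : Ugrp p 1) = 1 := rfl
lemma psl_pow (p : ℕ) (u : Ugrp p 1) (n : ℕ) : psl p (u ^ n) = (psl p u) ^ n := rfl
lemma psl_inv_mul (p : ℕ) (u : Ugrp p 1) : psl p u * psl p u⁻¹ = 1 := by
  rw [← psl_mul, mul_inv_cancel, psl_one]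
lemma Eu_ps (p : ℕ) [Fact p.Prime] (j : ℕ) (hj : 0 < j) :
    psl p (Eu p j hj) = 1 + X ^ j := rfl

lemma chi_one (p : ℕ) (χ : Ugrp p 1 → ZMod (p ^ 2)) (hhom : IsHom p χ) : χ 1 = 0 := by
  have h := hhom 1 1
  rw [one_mul] at h
  exact (left_eq_add.mp h)

lemma chi_pow (p : ℕ) (χ : Ugrp p 1 → ZMod (p ^ 2)) (hhom : IsHom p χ) (u : Ugrp p 1) (n : ℕ) :
    χ (u ^ n) = n • χ u := by
  induction n with
  | zero => simpa using chi_one p χ hhom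
  | succ n ih =>
    have h := hhom (u ^ n) u
    rw [← pow_succ] at h
    rw [h, ih, succ_nsmul]

lemma chi_E_dvd (p : ℕ) [Fact p.Prime] (l m : ℕ)
    (χ : Ugrp p 1 → ZMod (p ^ 2)) (hhom : IsHom p χ)
    (hred1 : ∀ i (hi : 0 < i), ¬ p ∣ i → i ≠ l → (i < m - l ∨ m < i) → χ (Eu p i hi) = 0)
    (hred2 : ∀ i (hi : 0 < i), ¬ p ∣ i → m - l ≤ i → i ≤ m →
      (p : ZMod (p ^ 2)) ∣ χ (Eu p i hi)) :
    ∀ j (hj : 0 < j), j ≠ l → (p : ZMod (p ^ 2)) ∣ χ (Eu p j hj) := by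
  intro j hj hjl
  by_cases hpj : p ∣ j
  · obtain ⟨a, rfl⟩ := hpj
    have ha : 0 < a := Nat.pos_of_ne_zero (by rintro rfl; simp at hj)
    haveI := charP_ps p
    have hfrob : ((1 : PowerSeries (ZMod p)) + X ^ a) ^ p = 1 + X ^ (p * a) := by
      rw [add_pow_char, one_pow, ← pow_mul, mul_comm a p]
    have hEu : Eu p (p * a) hj = (Eu p a ha) ^ p := by
      apply Subtype.ext
      apply Units.ext
      show psl p (Eu p (p * a) hj) = psl p ((Eu p a ha) ^ p)
      rw [Eu_ps, psl_pow, Eu_ps, hfrob]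
    rw [hEu, chi_pow p χ hhom, nsmul_eq_mul]
    exact dvd_mul_right _ _
  · by_cases hint : m - l ≤ j ∧ j ≤ m
    · exact hred2 j hj hpj hint.1 hint.2
    · rw [hred1 j hj hpj hjl (by omega)]
      exact dvd_zero _

lemma chi_high_dvd (p : ℕ) [Fact p.Prime] (l : ℕ) (hl : 0 < l)
    (χ : Ugrp p 1 → ZMod (p ^ 2)) (hhom : IsHom p χ) (hcont : IsCont p χ)
    (hE : ∀ j (hj : 0 < j), j ≠ l → (p : ZMod (p ^ 2)) ∣ χ (Eu p j hj)) :
    ∀ u : Ugrp p 1, (X : PowerSeries (ZMod p)) ^ (l + 1) ∣ psl p u - 1 →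
      (p : ZMod (p ^ 2)) ∣ χ u := by
  obtain ⟨N, hN⟩ := hcont
  have H : ∀ d j (u : Ugrp p 1), l + 1 ≤ j → N ≤ j + d →
      (X : PowerSeries (ZMod p)) ^ j ∣ psl p u - 1 → (p : ZMod (p ^ 2)) ∣ χ u := by
    intro d
    induction d with
    | zero =>
      intro j u hj hNle hdvd
      rw [hN u (dvd_trans (pow_dvd_pow _ (by omega)) hdvd)]
      exact dvd_zero _
    | succ d ih =>
      intro j u hj hNle hdvd
      have hj0 : 0 < j := by omega
      set a : ZMod p := coeff j (psl p u - 1) with ha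
      set c' : ℕ := a.val with hc'
      have hgps : psl p (Eu p j hj0 ^ c') = (1 + X ^ j) ^ c' := by rw [psl_pow, Eu_ps]
      have hXj : (X : PowerSeries (ZMod p)) ^ j ∣ X ^ j := dvd_rfl
      have hg1 : (X : PowerSeries (ZMod p)) ^ j ∣ psl p (Eu p j hj0 ^ c') - 1 := by
        rw [hgps]; exact dvd_sub_one_of_pow hj0 hXj c'
      have hgc : coeff j (psl p (Eu p j hj0 ^ c')) = a := by
        rw [hgps, coeff_pow_one_add hj0 hXj c', coeff_X_pow, if_pos rfl, nsmul_eq_mul,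
          mul_one, hc', ZMod.natCast_val, ZMod.cast_id]
      have huc : coeff j (psl p u) = a := by
        have e : psl p u = (psl p u - 1) + 1 := by ring
        rw [e, map_add, coeff_one, if_neg hj0.ne', add_zero, ha]
      have hsub : (X : PowerSeries (ZMod p)) ^ (j + 1)
          ∣ psl p u - psl p (Eu p j hj0 ^ c') :=
        X_pow_succ_dvd_sub hdvd hg1 (by rw [huc, hgc])
      have hfac : psl p (u * (Eu p j hj0 ^ c')⁻¹) - 1
          = (psl p u - psl p (Eu p j hj0 ^ c')) * psl p ((Eu p j hj0 ^ c')⁻¹) := by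
        apply sub_one_factor
        · rw [← psl_mul, inv_mul_cancel_right]
        · exact psl_inv_mul _ _
      have hdvd' : (X : PowerSeries (ZMod p)) ^ (j + 1)
          ∣ psl p (u * (Eu p j hj0 ^ c')⁻¹) - 1 := by
        rw [hfac]; exact hsub.mul_right _
      have hpu' := ih (j + 1) (u * (Eu p j hj0 ^ c')⁻¹) (by omega) (by omega) hdvd'
      have h2 := hhom (u * (Eu p j hj0 ^ c')⁻¹) (Eu p j hj0 ^ c')
      rw [inv_mul_cancel_right] at h2
      have hEdvd : (p : ZMod (p ^ 2)) ∣ χ (Eu p j hj0 ^ c') := by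
        rw [chi_pow p χ hhom, nsmul_eq_mul]
        exact Dvd.dvd.mul_left (hE j hj0 (by omega)) _
      rw [h2]
      exact dvd_add hpu' hEdvd
  intro u hu
  exact H N (l + 1) u le_rfl (by omega) hu


/-- Key computation in the proof that reduced forms are unique representatives when `l < p`:
if `χ` is in reduced form of type `⟨l, m⟩` with `χ(E_l) = x_l`, and
`u(t) = t·w(t)` with `w = 1 + n_k̃ t^k̃ + ⋯`, `0 < k̃ < l`, `n_k̃ ≠ 0`, then
`(ᵤχ)(E_{l-k̃}) = χ(1 + u^{l-k̃}) ≡ n_k̃ (l - k̃) x_l ≢ 0 (mod p)`. -/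
theorem reduced_form_obstruction (p : ℕ) [Fact p.Prime] (l m : ℕ) (hl : 0 < l) (hlp : l < p)
    (χ : Ugrp p 1 → ZMod (p ^ 2)) (hhom : IsHom p χ) (hcont : IsCont p χ)
    (hb : HasBreaks p χ l m)
    (hred1 : ∀ i (hi : 0 < i), ¬ p ∣ i → i ≠ l → (i < m - l ∨ m < i) → χ (Eu p i hi) = 0)
    (hred2 : ∀ i (hi : 0 < i), ¬ p ∣ i → m - l ≤ i → i ≤ m →
      (p : ZMod (p ^ 2)) ∣ χ (Eu p i hi))
    (xl : ℕ) (hxl1 : xl < p) (hxl2 : xl ≠ 0) (hxl : χ (Eu p l hl) = (xl : ZMod (p ^ 2)))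
    (w : PowerSeries (ZMod p)) (hw : constantCoeff w = 1)
    (kt : ℕ) (hk1 : 0 < kt) (hk2 : kt < l) (hkc : coeff kt w ≠ 0)
    (hmin : ∀ i, 0 < i → i < kt → coeff i w = 0) :
    ∀ v : Ugrp p 1,
      ((v : (PowerSeries (ZMod p))ˣ) : PowerSeries (ZMod p)) = 1 + (X * w) ^ (l - kt) →
      ZMod.castHom (dvd_pow_self p two_ne_zero) (ZMod p) (χ v)
          = coeff kt w * ((l - kt : ℕ) : ZMod p) * (xl : ZMod p) ∧
        ZMod.castHom (dvd_pow_self p two_ne_zero) (ZMod p) (χ v) ≠ 0 := by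
  intro v hv
  set q := l - kt with hqdef
  have hq0 : 0 < q := by omega
  have hql : q + kt = l := by omega
  have hqne : q ≠ l := by omega
  set c := coeff kt w with hc
  have hwr : (X : PowerSeries (ZMod p)) ^ kt ∣ w - 1 := by
    rw [X_pow_dvd_iff]
    intro i hi
    rcases Nat.eq_zero_or_pos i with rfl | hipos
    · simp [hw]
    · simp [hmin i hipos hi, coeff_one, hipos.ne']
  have h1w : (1 : PowerSeries (ZMod p)) + (w - 1) = w := by ring
  have hcw1 : coeff kt (w - 1) = c := by
    rw [map_sub, coeff_one, if_neg hk1.ne', sub_zero, hc]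
  have hwq1 : (X : PowerSeries (ZMod p)) ^ kt ∣ w ^ q - 1 := by
    have h := dvd_sub_one_of_pow hk1 hwr q; rwa [h1w] at h
  have hcwq : coeff kt (w ^ q - 1) = (q : ZMod p) * c := by
    have h := coeff_pow_one_add hk1 hwr q
    rw [h1w] at h
    rw [map_sub, h, hcw1, coeff_one, if_neg hk1.ne', sub_zero, nsmul_eq_mul]
  have hvps : psl p v = 1 + (X * w) ^ q := hv
  have hv1 : psl p v - (1 + X ^ q) = X ^ q * (w ^ q - 1) := by
    rw [hvps, mul_pow]; ring
  have hDl : (X : PowerSeries (ZMod p)) ^ l ∣ psl p v - (1 + X ^ q) := by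
    rw [hv1, ← hql, pow_add]
    exact mul_dvd_mul_left _ hwq1
  have hcl : coeff l (psl p v - (1 + X ^ q)) = (q : ZMod p) * c := by
    rw [hv1, ← hql, add_comm q kt, coeff_X_pow_mul, hcwq]
  set Eq1 := Eu p q hq0 with hEq1
  set El := Eu p l hl with hEl
  set c' : ℕ := ((q : ZMod p) * c).val with hc'
  have hEqps : psl p Eq1 = 1 + X ^ q := Eu_ps p q hq0
  have hfac1 : psl p (v * Eq1⁻¹) - 1 = (psl p v - (1 + X ^ q)) * psl p (Eq1⁻¹) := by
    apply sub_one_factor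
    · rw [← hEqps, ← psl_mul, inv_mul_cancel_right]
    · rw [← hEqps]; exact psl_inv_mul p Eq1
  have hccinv : constantCoeff (psl p (Eq1⁻¹)) = 1 := by
    have h2 := congrArg constantCoeff (psl_inv_mul p Eq1)
    rw [map_mul, hEqps] at h2
    simpa [zero_pow hq0.ne'] using h2
  have hv1dvd : (X : PowerSeries (ZMod p)) ^ l ∣ psl p (v * Eq1⁻¹) - 1 := by
    rw [hfac1]; exact hDl.mul_right _
  have hv1coeff : coeff l (psl p (v * Eq1⁻¹) - 1) = (q : ZMod p) * c := by
    rw [hfac1, coeff_mul_of_X_pow_dvd _ hDl, hcl, hccinv, mul_one]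
  have hgps : psl p (El ^ c') = (1 + X ^ l) ^ c' := by rw [psl_pow, hEl, Eu_ps]
  have hXl : (X : PowerSeries (ZMod p)) ^ l ∣ X ^ l := dvd_rfl
  have hg1 : (X : PowerSeries (ZMod p)) ^ l ∣ psl p (El ^ c') - 1 := by
    rw [hgps]; exact dvd_sub_one_of_pow hl hXl c'
  have hgc : coeff l (psl p (El ^ c')) = (q : ZMod p) * c := by
    rw [hgps, coeff_pow_one_add hl hXl c', coeff_X_pow, if_pos rfl, nsmul_eq_mul,
      mul_one, hc', ZMod.natCast_val, ZMod.cast_id]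
  have hvc : coeff l (psl p (v * Eq1⁻¹)) = (q : ZMod p) * c := by
    have e : psl p (v * Eq1⁻¹) = (psl p (v * Eq1⁻¹) - 1) + 1 := by ring
    rw [e, map_add, coeff_one, if_neg hl.ne', add_zero, hv1coeff]
  have hsub2 : (X : PowerSeries (ZMod p)) ^ (l + 1)
      ∣ psl p (v * Eq1⁻¹) - psl p (El ^ c') :=
    X_pow_succ_dvd_sub hv1dvd hg1 (by rw [hvc, hgc])
  have hfac2 : psl p (v * Eq1⁻¹ * (El ^ c')⁻¹) - 1
      = (psl p (v * Eq1⁻¹) - psl p (El ^ c')) * psl p ((El ^ c')⁻¹) := by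
    apply sub_one_factor
    · rw [← psl_mul, inv_mul_cancel_right]
    · exact psl_inv_mul _ _
  have hv2dvd : (X : PowerSeries (ZMod p)) ^ (l + 1)
      ∣ psl p (v * Eq1⁻¹ * (El ^ c')⁻¹) - 1 := by
    rw [hfac2]; exact hsub2.mul_right _
  have hE := chi_E_dvd p l m χ hhom hred1 hred2
  have hv2chi : (p : ZMod (p ^ 2)) ∣ χ (v * Eq1⁻¹ * (El ^ c')⁻¹) :=
    chi_high_dvd p l hl χ hhom hcont hE _ hv2dvd
  have hsplit : χ v = χ (v * Eq1⁻¹ * (El ^ c')⁻¹) + χ (El ^ c') + χ Eq1 := by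
    have h1 := hhom (v * Eq1⁻¹ * (El ^ c')⁻¹) (El ^ c')
    rw [inv_mul_cancel_right] at h1
    have h2 := hhom (v * Eq1⁻¹) Eq1
    rw [inv_mul_cancel_right] at h2
    rw [h2, h1]
  have hEqchi : (p : ZMod (p ^ 2)) ∣ χ Eq1 := hE q hq0 hqne
  set π := ZMod.castHom (dvd_pow_self p two_ne_zero) (ZMod p) with hπ
  have hπp : ∀ x : ZMod (p ^ 2), (p : ZMod (p ^ 2)) ∣ x → π x = 0 := by
    rintro x ⟨y, rfl⟩
    rw [map_mul, map_natCast, ZMod.natCast_self, zero_mul]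
  have hπchi : π (χ v) = (c' : ZMod p) * (xl : ZMod p) := by
    rw [hsplit, map_add, map_add, hπp _ hv2chi, hπp _ hEqchi, add_zero, zero_add,
      chi_pow p χ hhom, nsmul_eq_mul, map_mul, map_natCast, hEl, hxl, map_natCast]
  have hc'cast : (c' : ZMod p) = (q : ZMod p) * c := by
    rw [hc', ZMod.natCast_val, ZMod.cast_id]
  constructor
  · rw [hπchi, hc'cast]; ring
  · rw [hπchi, hc'cast]
    have hqne0 : (q : ZMod p) ≠ 0 := by
      rw [Ne, ZMod.natCast_eq_zero_iff]
      intro hd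
      have := Nat.le_of_dvd hq0 hd
      omega
    have hxlne : (xl : ZMod p) ≠ 0 := by
      rw [Ne, ZMod.natCast_eq_zero_iff]
      intro hd
      have := Nat.le_of_dvd (Nat.pos_of_ne_zero hxl2) hd
      omega
    exact mul_ne_zero (mul_ne_zero hqne0 hkc) hxlne
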